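/- Let D be a positive definite n×n complex matrix with trace 1, defining the faithful state φ(y) = tr(Dy) on the matrix algebra Mₙ(ℂ). Then for every Hermitian x ∈ Mₙ(ℂ), the trace norm ‖D^{1/2} x D^{1/2}‖₁ equals the infimum of φ(a) + φ(b) over all decompositions x = a − b with a, b positive semidefinite. -/

import Mathlib

open scoped ComplexOrder
open Matrix
variable {n : ℕ}

/-- The positive semidefinite square root of a positive semidefinite matrix
(the definition `Matrix.PosSemidef.sqrt` of the older Mathlib, removed since). -/
noncomputable def Matrix.PosSemidef.sqrt {m 𝕜 : Type*} [Fintype m] [DecidableEq m] [RCLike 𝕜]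
    {A : Matrix m m 𝕜} (hA : A.PosSemidef) : Matrix m m 𝕜 :=
  hA.1.eigenvectorUnitary.1 * Matrix.diagonal ((↑) ∘ (√·) ∘ hA.1.eigenvalues) *
    (star hA.1.eigenvectorUnitary : Matrix m m 𝕜)

/-- The trace (Schatten-1) norm of a complex matrix: `tr((y*y)^{1/2})`. -/
noncomputable def traceNorm (y : Matrix (Fin n) (Fin n) ℂ) : ℝ :=
  ((Matrix.PosSemidef.sqrt (Matrix.posSemidef_conjTranspose_mul_self y)).trace).re

open scoped MatrixOrder in
lemma Matrix.PosSemidef.my_sqrt_eq_cfc {A : Matrix (Fin n) (Fin n) ℂ} (hA : A.PosSemidef) :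
    hA.sqrt = CFC.sqrt A := by
  have h0 : (0 : Matrix (Fin n) (Fin n) ℂ) ≤ A := Matrix.nonneg_iff_posSemidef.mpr hA
  rw [CFC.sqrt_eq_real_sqrt A h0, cfcₙ_eq_cfc, hA.1.cfc_eq]
  simp [Matrix.IsHermitian.cfc, Matrix.PosSemidef.sqrt, Function.comp_def]

open scoped MatrixOrder in
lemma Matrix.PosSemidef.posSemidef_sqrt {A : Matrix (Fin n) (Fin n) ℂ} (hA : A.PosSemidef) :
    hA.sqrt.PosSemidef := by
  rw [hA.my_sqrt_eq_cfc]
  exact Matrix.nonneg_iff_posSemidef.mp (CFC.sqrt_nonneg A)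

open scoped MatrixOrder in
lemma Matrix.PosSemidef.sqrt_mul_self {A : Matrix (Fin n) (Fin n) ℂ} (hA : A.PosSemidef) :
    hA.sqrt * hA.sqrt = A := by
  rw [hA.my_sqrt_eq_cfc]
  exact CFC.sqrt_mul_sqrt_self A (Matrix.nonneg_iff_posSemidef.mpr hA)

open scoped MatrixOrder in
lemma Matrix.PosSemidef.eq_sqrt_of_sq_eq {A B : Matrix (Fin n) (Fin n) ℂ} (hB : B.PosSemidef)
    (hA : A.PosSemidef) (h : B ^ 2 = A) : B = hA.sqrt := by
  rw [hA.my_sqrt_eq_cfc]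
  exact (CFC.sqrt_unique (by rw [← sq]; exact h) (Matrix.nonneg_iff_posSemidef.mpr hB)).symm

lemma my_trace_nonneg {M : Matrix (Fin n) (Fin n) ℂ} (hM : M.PosSemidef) :
    0 ≤ M.trace.re := by
  have h : ∀ i, 0 ≤ M i i := fun i => by
    exact hM.diag_nonneg
  have h2 : 0 ≤ M.trace := Finset.sum_nonneg fun i _ => h i
  exact (Complex.le_def.mp h2).1

lemma my_trace_mul_nonneg {M N : Matrix (Fin n) (Fin n) ℂ} (hM : M.PosSemidef)
    (hN : N.PosSemidef) : 0 ≤ (M * N).trace.re := by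
  have hS : hM.sqrt ᴴ = hM.sqrt := hM.posSemidef_sqrt.1
  have key : (M * N).trace = (hM.sqrt * N * hM.sqrt).trace := by
    conv_lhs => rw [← hM.sqrt_mul_self]
    rw [Matrix.mul_assoc, Matrix.trace_mul_comm]
  have h0 := my_trace_nonneg (hN.mul_mul_conjTranspose_same hM.sqrt)
  rw [hS] at h0
  rw [key]; exact h0

/-- For a faithful state `φ(y) = tr(Dy)` on `Mₙ(ℂ)` and Hermitian `x`, the trace norm of
`D^{1/2} x D^{1/2}` equals the infimum of `φ(a) + φ(b)` over decompositions `x = a − b`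
with `a, b` positive semidefinite. -/
theorem traceNorm_symm_eq_inf (D x : Matrix (Fin n) (Fin n) ℂ)
    (hD : D.PosDef) (hDtr : D.trace = 1) (hx : x.IsHermitian) :
    traceNorm (Matrix.PosSemidef.sqrt hD.posSemidef * x * Matrix.PosSemidef.sqrt hD.posSemidef) =
      sInf { r : ℝ | ∃ a b : Matrix (Fin n) (Fin n) ℂ,
        a.PosSemidef ∧ b.PosSemidef ∧ x = a - b ∧
        r = ((D * a).trace).re + ((D * b).trace).re } := by
  classical
  set S := hD.posSemidef.sqrt with hSdef
  have hSH : S ᴴ = S := hD.posSemidef.posSemidef_sqrt.1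
  have hSS : S * S = D := hD.posSemidef.sqrt_mul_self
  set y := S * x * S with hydef
  have hy : y.IsHermitian := by
    show y ᴴ = y
    rw [hydef, Matrix.conjTranspose_mul, Matrix.conjTranspose_mul, hSH, hx.eq,
      Matrix.mul_assoc]
  set U : Matrix (Fin n) (Fin n) ℂ := (hy.eigenvectorUnitary : Matrix (Fin n) (Fin n) ℂ)
    with hUdef
  set e : Fin n → ℝ := hy.eigenvalues with hedef
  have hU1 : U * star U = 1 := Matrix.mem_unitaryGroup_iff.mp hy.eigenvectorUnitary.2
  have hU2 : star U * U = 1 := Matrix.mem_unitaryGroup_iff'.mp hy.eigenvectorUnitary.2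
  set C : (Fin n → ℝ) → Matrix (Fin n) (Fin n) ℂ :=
    fun f => U * Matrix.diagonal (fun i => (f i : ℂ)) * star U with hCdef
  have hCe : y = C e := by
    exact hy.spectral_theorem
  have hUcancel : ∀ Z : Matrix (Fin n) (Fin n) ℂ, star U * (U * Z) = Z := fun Z => by
    rw [← Matrix.mul_assoc, hU2, Matrix.one_mul]
  have hCmul : ∀ f g, C f * C g = C (fun i => f i * g i) := by
    intro f g
    simp only [hCdef, Matrix.mul_assoc]
    rw [hUcancel, ← Matrix.mul_assoc (Matrix.diagonal _) (Matrix.diagonal _),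
      Matrix.diagonal_mul_diagonal]
    push_cast
    rfl
  have hCtr : ∀ f, (C f).trace = ∑ i, (f i : ℂ) := by
    intro f
    simp only [hCdef]
    rw [Matrix.trace_mul_cycle, hU2, Matrix.one_mul, Matrix.trace_diagonal]
  have hCpsd : ∀ f, (∀ i, 0 ≤ f i) → (C f).PosSemidef := by
    intro f hf
    have hd : Matrix.PosSemidef (Matrix.diagonal (fun i => (f i : ℂ))) :=
      Matrix.PosSemidef.diagonal fun i => by
        simp only [Pi.zero_apply]; exact_mod_cast hf i
    simpa [hCdef, Matrix.star_eq_conjTranspose] using hd.mul_mul_conjTranspose_same U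
  have hCsub : ∀ f g, C f - C g = C (fun i => f i - g i) := by
    intro f g
    simp only [hCdef]
    rw [← Matrix.sub_mul, ← Matrix.mul_sub, Matrix.diagonal_sub]
    push_cast
    rfl
  have hCadd : ∀ f g, C f + C g = C (fun i => f i + g i) := by
    intro f g
    simp only [hCdef]
    rw [← Matrix.add_mul, ← Matrix.mul_add, Matrix.diagonal_add]
    push_cast
    rfl
  have hC1 : C (fun _ => 1) = 1 := by
    simp only [hCdef, Complex.ofReal_one, Matrix.diagonal_one, Matrix.mul_one]
    exact hU1
  -- trace norm equals sum of |e i|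
  have habs : (∀ i, (0:ℝ) ≤ |e i|) := fun i => abs_nonneg _
  have hsq : (C (fun i => |e i|)) ^ 2 = y ᴴ * y := by
    rw [hy.eq, sq, hCmul, hCe, hCmul]
    simp only [abs_mul_abs_self]
  have hsqrt : C (fun i => |e i|) =
      (Matrix.posSemidef_conjTranspose_mul_self y).sqrt :=
    (hCpsd _ habs).eq_sqrt_of_sq_eq _ hsq
  have hTN : traceNorm y = ∑ i, |e i| := by
    rw [traceNorm, ← hsqrt, hCtr]
    push_cast
    rw [Complex.re_sum]
    simp
  set T : ℝ := ∑ i, |e i| with hTdef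
  -- invertibility of S
  have hdet : IsUnit S.det := by
    have h1 : S.det * S.det = D.det := by rw [← Matrix.det_mul, hSS]
    have h2 : D.det ≠ 0 := hD.det_pos.ne'
    refine isUnit_iff_ne_zero.mpr fun h => h2 ?_
    rw [← h1, h, mul_zero]
  set R : Matrix (Fin n) (Fin n) ℂ := S⁻¹ with hRdef
  have hRS : R * S = 1 := Matrix.nonsing_inv_mul _ hdet
  have hSR : S * R = 1 := Matrix.mul_nonsing_inv _ hdet
  have hRH : R ᴴ = R := by rw [hRdef, Matrix.conjTranspose_nonsing_inv, hSH]
  have hRDR : R * D * R = 1 := by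
    rw [← hSS, ← Matrix.mul_assoc, Matrix.mul_assoc (R * S), hSR, Matrix.mul_one, hRS]
  -- positive and negative parts of e
  set ep : Fin n → ℝ := fun i => (|e i| + e i) / 2 with hepdef
  set em : Fin n → ℝ := fun i => (|e i| - e i) / 2 with hemdef
  have hep : ∀ i, 0 ≤ ep i := fun i => by
    have := neg_abs_le (e i); simp only [hepdef]; linarith
  have hem : ∀ i, 0 ≤ em i := fun i => by
    have := le_abs_self (e i); simp only [hemdef]; linarith
  have hmem : T ∈ { r : ℝ | ∃ a b : Matrix (Fin n) (Fin n) ℂ,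
      a.PosSemidef ∧ b.PosSemidef ∧ x = a - b ∧
      r = ((D * a).trace).re + ((D * b).trace).re } := by
    have key : ∀ f, (D * (R * C f * R)).trace = ∑ i, (f i : ℂ) := by
      intro f
      have h1 : D * (R * C f * R) = (D * (R * C f)) * R := by
        simp only [Matrix.mul_assoc]
      rw [h1, Matrix.trace_mul_comm]
      have h2 : R * (D * (R * C f)) = (R * D * R) * C f := by
        simp only [Matrix.mul_assoc]
      rw [h2, hRDR, Matrix.one_mul, hCtr]
    refine ⟨R * C ep * R, R * C em * R, ?_, ?_, ?_, ?_⟩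
    · have h := (hCpsd ep hep).mul_mul_conjTranspose_same R
      rwa [hRH] at h
    · have h := (hCpsd em hem).mul_mul_conjTranspose_same R
      rwa [hRH] at h
    · have h2 : C ep - C em = C e := by
        rw [hCsub]
        congr 1
        funext i; simp only [hepdef, hemdef]; ring
      have h1 : R * C ep * R - R * C em * R = R * C e * R := by
        rw [← h2, Matrix.mul_sub, Matrix.sub_mul]
      rw [h1, ← hCe, hydef]
      have h2 : R * (S * x * S) * R = (R * S) * x * (S * R) := by
        simp only [Matrix.mul_assoc]
      rw [h2, hRS, hSR, Matrix.one_mul, Matrix.mul_one]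
    · rw [key ep, key em]
      have hre : ∀ f : Fin n → ℝ, (∑ i, ((f i : ℝ) : ℂ)).re = ∑ i, f i := by
        intro f; rw [Complex.re_sum]; simp
      rw [hre, hre, hTdef, ← Finset.sum_add_distrib]
      refine Finset.sum_congr rfl fun i _ => ?_
      simp only [hepdef, hemdef]; ring
  have hlb : ∀ r ∈ { r : ℝ | ∃ a b : Matrix (Fin n) (Fin n) ℂ,
      a.PosSemidef ∧ b.PosSemidef ∧ x = a - b ∧
      r = ((D * a).trace).re + ((D * b).trace).re }, T ≤ r := by
    rintro r ⟨a, b, ha, hb, hab, rfl⟩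
    have hA : (S * a * S).PosSemidef := by
      have h := ha.mul_mul_conjTranspose_same S; rwa [hSH] at h
    have hB : (S * b * S).PosSemidef := by
      have h := hb.mul_mul_conjTranspose_same S; rwa [hSH] at h
    have htr : ∀ c : Matrix (Fin n) (Fin n) ℂ, (D * c).trace = (S * c * S).trace := by
      intro c
      conv_lhs => rw [← hSS]
      rw [Matrix.mul_assoc, Matrix.trace_mul_comm]
    have hyab : y = S * a * S - S * b * S := by
      rw [hydef, hab, Matrix.mul_sub, Matrix.sub_mul]
    set sg : Fin n → ℝ := fun i => Real.sign (e i) with hsgdef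
    have hsg1 : ∀ i, 0 ≤ 1 - sg i := by
      intro i
      rcases lt_trichotomy (e i) 0 with h | h | h
      · simp only [hsgdef, Real.sign_of_neg h]; norm_num
      · simp only [hsgdef, h, Real.sign_zero]; norm_num
      · simp only [hsgdef, Real.sign_of_pos h]; norm_num
    have hsg2 : ∀ i, 0 ≤ 1 + sg i := by
      intro i
      rcases lt_trichotomy (e i) 0 with h | h | h
      · simp only [hsgdef, Real.sign_of_neg h]; norm_num
      · simp only [hsgdef, h, Real.sign_zero]; norm_num
      · simp only [hsgdef, Real.sign_of_pos h]; norm_num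
    have hesg : ∀ i, e i * sg i = |e i| := by
      intro i
      rcases lt_trichotomy (e i) 0 with h | h | h
      · simp only [hsgdef, Real.sign_of_neg h, abs_of_neg h]; ring
      · simp only [hsgdef, h, Real.sign_zero, abs_zero, mul_zero]
      · simp only [hsgdef, Real.sign_of_pos h, abs_of_pos h]; ring
    have hCsg1 : C (fun i => 1 - sg i) = 1 - C sg := by
      rw [← hCsub, hC1]
    have hCsg2 : C (fun i => 1 + sg i) = 1 + C sg := by
      rw [← hCadd, hC1]
    have hT2 : (y * C sg).trace.re = T := by
      rw [hCe, hCmul]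
      have : (fun i => e i * sg i) = fun i => |e i| := funext fun i => hesg i
      rw [this, hCtr, Complex.re_sum, hTdef]
      simp
    have hineqA : (S * a * S * C sg).trace.re ≤ (S * a * S).trace.re := by
      have h0 := my_trace_mul_nonneg hA (hCpsd (fun i => 1 - sg i) hsg1)
      rw [hCsg1, Matrix.mul_sub, Matrix.mul_one, Matrix.trace_sub, Complex.sub_re] at h0
      linarith
    have hineqB : -(S * b * S * C sg).trace.re ≤ (S * b * S).trace.re := by
      have h0 := my_trace_mul_nonneg hB (hCpsd (fun i => 1 + sg i) hsg2)
      rw [hCsg2, Matrix.mul_add, Matrix.mul_one, Matrix.trace_add, Complex.add_re] at h0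
      linarith
    have hsplit : (y * C sg).trace = (S * a * S * C sg).trace - (S * b * S * C sg).trace := by
      rw [hyab, Matrix.sub_mul, Matrix.trace_sub]
    have : T = (S * a * S * C sg).trace.re - (S * b * S * C sg).trace.re := by
      rw [← hT2, hsplit, Complex.sub_re]
    rw [htr a, htr b]
    linarith
  rw [hTN]
  exact le_antisymm (le_csInf ⟨T, hmem⟩ hlb) (csInf_le ⟨T, hlb⟩ hmem)
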